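/- arXiv:2003.08298 — 4 statements merged into one kernel-verified Lean document; each statement's English description precedes it below -/
import Mathlib

section
/- For every n ≥ 1 there exists a graph ontology O_n with 3n+1 vertices and 4n edges, and vertices v, x, such that the consequence (v,x) has exactly 2^n distinct justifications w.r.t. O_n. -/
def IsJustification {A C : Type*} (ent : Finset A → C → Prop)
    (O M : Finset A) (c : C) : Prop :=
  M ⊆ O ∧ ent M c ∧ ∀ M' ⊂ M, ¬ ent M' c

def Reach {V : Type*} (O : Finset (V × V)) (v w : V) : Prop :=
  Relation.ReflTransGen (fun a b => (a, b) ∈ O) v w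

/-- The set of vertices occurring in a graph ontology. -/
def verts {V : Type*} [DecidableEq V] (O : Finset (V × V)) : Finset V :=
  O.image Prod.fst ∪ O.image Prod.snd

namespace Diamonds

/-- First edge of side `b` of diamond `i`. -/
def e1 (i : ℕ) (b : Bool) : (ℕ × ℕ) × (ℕ × ℕ) := ((0, i), (cond b 1 2, i + 1))

/-- Second edge of side `b` of diamond `i`. -/
def e2 (i : ℕ) (b : Bool) : (ℕ × ℕ) × (ℕ × ℕ) := ((cond b 1 2, i + 1), (0, i + 1))

/-- Diamond `i`. -/
def D (i : ℕ) : Finset ((ℕ × ℕ) × (ℕ × ℕ)) :=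
  {e1 i true, e2 i true, e1 i false, e2 i false}

/-- The ontology: a chain of `n` diamonds. -/
def On (n : ℕ) : Finset ((ℕ × ℕ) × (ℕ × ℕ)) := (Finset.range n).biUnion D

/-- The path picked out by a choice function `f`. -/
def P (n : ℕ) (f : Fin n → Bool) : Finset ((ℕ × ℕ) × (ℕ × ℕ)) :=
  Finset.univ.biUnion (fun i : Fin n => {e1 i (f i), e2 i (f i)})

lemma cond_inj {b b' : Bool} (h : (cond b 1 2 : ℕ) = cond b' 1 2) : b = b' := by
  cases b <;> cases b' <;> simp_all

lemma cond_ne_zero (b : Bool) : (cond b 1 2 : ℕ) ≠ 0 := by cases b <;> simp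

lemma e1_inj {i j : ℕ} {b b' : Bool} (h : e1 i b = e1 j b') : i = j ∧ b = b' := by
  simp only [e1, Prod.ext_iff] at h
  exact ⟨h.1.2, cond_inj h.2.1⟩

lemma e2_inj {i j : ℕ} {b b' : Bool} (h : e2 i b = e2 j b') : i = j ∧ b = b' := by
  simp only [e2, Prod.ext_iff] at h
  exact ⟨by omega, cond_inj h.1.1⟩

lemma e1_ne_e2 {i j : ℕ} {b b' : Bool} : e1 i b ≠ e2 j b' := by
  simp only [e1, e2, Prod.ext_iff, ne_eq, not_and]
  intro h
  exact absurd h.1.symm (cond_ne_zero b')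

lemma mem_D {p : (ℕ × ℕ) × (ℕ × ℕ)} {i : ℕ} :
    p ∈ D i ↔ ∃ b, p = e1 i b ∨ p = e2 i b := by
  simp only [D, Finset.mem_insert, Finset.mem_singleton]
  constructor
  · rintro (h | h | h | h)
    exacts [⟨true, Or.inl h⟩, ⟨true, Or.inr h⟩, ⟨false, Or.inl h⟩, ⟨false, Or.inr h⟩]
  · rintro ⟨b, h | h⟩ <;> cases b <;> tauto

lemma mem_On {p : (ℕ × ℕ) × (ℕ × ℕ)} {n : ℕ} :
    p ∈ On n ↔ ∃ i < n, ∃ b, p = e1 i b ∨ p = e2 i b := by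
  simp only [On, Finset.mem_biUnion, Finset.mem_range, mem_D]

lemma P_subset_On {n : ℕ} (f : Fin n → Bool) : P n f ⊆ On n := by
  intro p hp
  simp only [P, Finset.mem_biUnion, Finset.mem_univ, true_and, Finset.mem_insert,
    Finset.mem_singleton] at hp
  obtain ⟨i, h⟩ := hp
  exact mem_On.mpr ⟨i, i.isLt, f i, h⟩

lemma mem_P {n : ℕ} {f : Fin n → Bool} {p : (ℕ × ℕ) × (ℕ × ℕ)} :
    p ∈ P n f ↔ ∃ i : Fin n, p = e1 i (f i) ∨ p = e2 i (f i) := by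
  simp [P]

/-- One step of the path analysis. -/
lemma step {n i : ℕ} {M : Finset ((ℕ × ℕ) × (ℕ × ℕ))} (hM : M ⊆ On n) (hi : i < n)
    (h : Reach M (0, i) (0, n)) :
    ∃ b, e1 i b ∈ M ∧ e2 i b ∈ M ∧ Reach M (0, i + 1) (0, n) := by
  rcases (Relation.ReflTransGen.cases_head h) with heq | ⟨c, hc, hrest⟩
  · exfalso; simp only [Prod.ext_iff] at heq; omega
  obtain ⟨j, hj, b, he | he⟩ := mem_On.mp (hM hc)
  swap
  · exfalso
    have : (0 : ℕ) = cond b 1 2 := congrArg (Prod.fst ∘ Prod.fst) he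
    exact cond_ne_zero b this.symm
  have hij : j = i := by
    have := congrArg (Prod.snd ∘ Prod.fst) he
    simpa [e1] using this.symm
  subst hij
  have hcval : c = (cond b 1 2, j + 1) := congrArg Prod.snd he
  subst hcval
  rcases (Relation.ReflTransGen.cases_head hrest) with heq | ⟨c', hc', hrest'⟩
  · exfalso
    have := congrArg Prod.fst heq
    exact cond_ne_zero b this
  obtain ⟨j', hj', b', he' | he'⟩ := mem_On.mp (hM hc')
  · exfalso
    have : (cond b 1 2 : ℕ) = 0 := congrArg (Prod.fst ∘ Prod.fst) he'
    exact cond_ne_zero b this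
  have hjb : j' = j ∧ b' = b := by
    have h1 : (cond b 1 2 : ℕ) = cond b' 1 2 := congrArg (Prod.fst ∘ Prod.fst) he'
    have h2 : j + 1 = j' + 1 := congrArg (Prod.snd ∘ Prod.fst) he'
    exact ⟨by omega, (cond_inj h1).symm⟩
  obtain ⟨rfl, rfl⟩ := hjb
  have hcval' : c' = (0, j' + 1) := congrArg Prod.snd he'
  subst hcval'
  exact ⟨b', he ▸ hc, he' ▸ hc', hrest'⟩

/-- Every diamond is crossed. -/
lemma reach_all {n : ℕ} {M : Finset ((ℕ × ℕ) × (ℕ × ℕ))} (hM : M ⊆ On n)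
    (h : Reach M (0, 0) (0, n)) : ∀ i < n, ∃ b, e1 i b ∈ M ∧ e2 i b ∈ M := by
  suffices H : ∀ k i, n - i ≤ k → Reach M (0, i) (0, n) →
      ∀ j, i ≤ j → j < n → ∃ b, e1 j b ∈ M ∧ e2 j b ∈ M by
    intro i hi
    exact H n 0 (by omega) h i (by omega) hi
  intro k
  induction k with
  | zero => intro i hk _ j hij hjn; omega
  | succ k ih =>
    intro i hk hr j hij hjn
    have hi : i < n := by omega
    obtain ⟨b, h1, h2, hr'⟩ := step hM hi hr
    rcases eq_or_lt_of_le hij with rfl | hlt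
    · exact ⟨b, h1, h2⟩
    · exact ih (i + 1) (by omega) hr' j (by omega) hjn

lemma reach_of {n : ℕ} {M : Finset ((ℕ × ℕ) × (ℕ × ℕ))}
    (h : ∀ i < n, ∃ b, e1 i b ∈ M ∧ e2 i b ∈ M) : Reach M (0, 0) (0, n) := by
  suffices H : ∀ k i, i + k = n → Reach M (0, i) (0, n) by
    exact H n 0 (by omega)
  intro k
  induction k with
  | zero => intro i hi; rw [Nat.add_zero] at hi; subst hi; exact Relation.ReflTransGen.refl
  | succ k ih =>
    intro i hi
    obtain ⟨b, h1, h2⟩ := h i (by omega)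
    have : Reach M (0, i + 1) (0, n) := ih (i + 1) (by omega)
    exact Relation.ReflTransGen.head h1 (Relation.ReflTransGen.head h2 this)

/-- Characterization of justifications. -/
lemma just_iff {n : ℕ} {M : Finset ((ℕ × ℕ) × (ℕ × ℕ))} :
    IsJustification (fun S c => Reach S c.1 c.2) (On n) M (((0, 0) : ℕ × ℕ), ((0, n) : ℕ × ℕ))
      ↔ ∃ f : Fin n → Bool, M = P n f := by
  constructor
  · rintro ⟨hsub, hent, hmin⟩
    have hall := reach_all hsub hent
    choose g hg1 hg2 using fun (i : Fin n) => hall i i.isLt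
    refine ⟨g, ?_⟩
    by_contra hne
    have hPsub : P n g ⊆ M := by
      intro p hp
      obtain ⟨i, h | h⟩ := mem_P.mp hp
      · exact h ▸ hg1 i
      · exact h ▸ hg2 i
    have hss : P n g ⊂ M := lt_of_le_of_ne hPsub (fun h => hne h.symm)
    exact hmin _ hss (reach_of (fun i hi => ⟨g ⟨i, hi⟩,
      mem_P.mpr ⟨⟨i, hi⟩, Or.inl rfl⟩, mem_P.mpr ⟨⟨i, hi⟩, Or.inr rfl⟩⟩))
  · rintro ⟨f, rfl⟩
    refine ⟨P_subset_On f, ?_, ?_⟩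
    · exact reach_of (fun i hi =>
        ⟨f ⟨i, hi⟩, mem_P.mpr ⟨⟨i, hi⟩, Or.inl rfl⟩, mem_P.mpr ⟨⟨i, hi⟩, Or.inr rfl⟩⟩)
    · intro M' hM' hent
      have hsub : M' ⊆ On n := (subset_of_ssubset hM').trans (P_subset_On f)
      have hall := reach_all hsub hent
      have hrev : P n f ⊆ M' := by
        intro p hp
        obtain ⟨i, hpe⟩ := mem_P.mp hp
        obtain ⟨b, h1, h2⟩ := hall i i.isLt
        have hbf : b = f i := by
          obtain ⟨j, hj | hj⟩ := mem_P.mp (hM'.1 h1)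
          · obtain ⟨hij, hb⟩ := e1_inj hj
            rw [hb]; congr 1; exact Fin.ext hij.symm
          · exact absurd hj e1_ne_e2
        subst hbf
        rcases hpe with rfl | rfl
        exacts [h1, h2]
      exact absurd hrev (not_subset_of_ssubset hM')

lemma P_injective {n : ℕ} : Function.Injective (P n) := by
  intro f g h
  funext i
  have hmem : e1 i (f i) ∈ P n g := h ▸ mem_P.mpr ⟨i, Or.inl rfl⟩
  obtain ⟨j, hj | hj⟩ := mem_P.mp hmem
  · obtain ⟨hij, hb⟩ := e1_inj hj
    rw [hb]; congr 1; exact Fin.ext hij.symm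
  · exact absurd hj e1_ne_e2

/-- The vertex set of the ontology. -/
lemma verts_On (n : ℕ) (hn : 1 ≤ n) :
    verts (On n) = ((Finset.range (n + 1)).image fun i => ((0 : ℕ), i)) ∪
      ((Finset.range n).image fun i => ((1 : ℕ), i + 1)) ∪
      ((Finset.range n).image fun i => ((2 : ℕ), i + 1)) := by
  ext q
  simp only [verts, Finset.mem_union, Finset.mem_image, Finset.mem_range]
  constructor
  · rintro (⟨p, hp, rfl⟩ | ⟨p, hp, rfl⟩) <;>
    · obtain ⟨i, hi, b, rfl | rfl⟩ := mem_On.mp hp <;> cases b <;>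
        simp [e1, e2, Prod.ext_iff] <;> omega
  · rintro ((⟨i, hi, rfl⟩ | ⟨i, hi, rfl⟩) | ⟨i, hi, rfl⟩)
    · rcases Nat.lt_or_ge i n with hlt | hge
      · exact Or.inl ⟨e1 i true, mem_On.mpr ⟨i, hlt, true, Or.inl rfl⟩, rfl⟩
      · have hin : i = n := by omega
        subst hin
        refine Or.inr ⟨e2 (i - 1) true, mem_On.mpr ⟨i - 1, by omega, true, Or.inr rfl⟩, ?_⟩
        simp only [e2]
        congr 1
        omega
    · exact Or.inl ⟨e2 i true, mem_On.mpr ⟨i, hi, true, Or.inr rfl⟩, rfl⟩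
    · exact Or.inl ⟨e2 i false, mem_On.mpr ⟨i, hi, false, Or.inr rfl⟩, rfl⟩

lemma verts_card (n : ℕ) (hn : 1 ≤ n) : (verts (On n)).card = 3 * n + 1 := by
  rw [verts_On n hn]
  rw [Finset.card_union_of_disjoint, Finset.card_union_of_disjoint]
  · rw [Finset.card_image_of_injective _ (fun a b h => by simpa using h),
      Finset.card_image_of_injective _ (fun a b h => by simpa [Prod.ext_iff] using h),
      Finset.card_image_of_injective _ (fun a b h => by simpa [Prod.ext_iff] using h),
      Finset.card_range, Finset.card_range]
    omega
  · simp only [Finset.disjoint_left, Finset.mem_image, Finset.mem_range]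
    rintro p ⟨i, hi, rfl⟩ ⟨i', hi', h⟩
    simp [Prod.ext_iff] at h
  · simp only [Finset.disjoint_left, Finset.mem_union, Finset.mem_image, Finset.mem_range]
    rintro p (⟨i, hi, rfl⟩ | ⟨i, hi, rfl⟩) ⟨i', hi', h⟩ <;> simp [Prod.ext_iff] at h

lemma On_card (n : ℕ) : (On n).card = 4 * n := by
  rw [On, Finset.card_biUnion]
  · have hD : ∀ i, (D i).card = 4 := by
      intro i
      rw [D]
      rw [Finset.card_insert_of_notMem, Finset.card_insert_of_notMem,
        Finset.card_insert_of_notMem, Finset.card_singleton]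
      · simp only [Finset.mem_singleton]
        exact e1_ne_e2
      · simp only [Finset.mem_insert, Finset.mem_singleton]
        rintro (h | h)
        · exact e1_ne_e2 h.symm
        · exact absurd (e2_inj h).2 (by simp)
      · simp only [Finset.mem_insert, Finset.mem_singleton]
        rintro (h | h | h)
        · exact e1_ne_e2 h
        · exact absurd (e1_inj h).2 (by simp)
        · exact e1_ne_e2 h
    simp [hD, Finset.sum_const, Finset.card_range]
    ring
  · intro i _ j _ hij
    simp only [Finset.disjoint_left]
    intro p hp hp'
    obtain ⟨b, h | h⟩ := mem_D.mp hp <;> obtain ⟨b', h' | h'⟩ := mem_D.mp hp' <;>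
      first
      | exact hij (e1_inj (h.symm.trans h')).1
      | exact hij (e2_inj (h.symm.trans h')).1
      | exact e1_ne_e2 (h.symm.trans h')
      | exact e1_ne_e2 (h'.symm.trans h)

end Diamonds

open Diamonds in
theorem stmt_6 (n : ℕ) (hn : 1 ≤ n) :
    ∃ (O : Finset ((ℕ × ℕ) × (ℕ × ℕ))) (v x : ℕ × ℕ),
      (verts O).card = 3 * n + 1 ∧ O.card = 4 * n ∧
      {M : Finset ((ℕ × ℕ) × (ℕ × ℕ)) |
        IsJustification (fun S c => Reach S c.1 c.2) O M (v, x)}.ncard = 2 ^ n := by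
  refine ⟨On n, (0, 0), (0, n), verts_card n hn, On_card n, ?_⟩
  have hset : {M : Finset ((ℕ × ℕ) × (ℕ × ℕ)) |
      IsJustification (fun S c => Reach S c.1 c.2) (On n) M ((0, 0), (0, n))} =
      ↑((Finset.univ : Finset (Fin n → Bool)).image (P n)) := by
    ext M
    simp only [Set.mem_setOf_eq, Finset.coe_image, Finset.coe_univ, Set.image_univ,
      Set.mem_range]
    rw [just_iff]
    constructor
    · rintro ⟨f, rfl⟩; exact ⟨f, rfl⟩
    · rintro ⟨f, rfl⟩; exact ⟨f, rfl⟩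
  rw [hset, Set.ncard_coe_finset, Finset.card_image_of_injective _ P_injective,
    Finset.card_univ]
  simp
end

section
/- In the diamond-chain graph O_n (n diamonds in series), every justification of (u_0, u_n) has exactly 2n edges, and distinct choices of a-side or b-side in each diamond yield distinct justifications; hence the number of justifications of (u_0,u_n) w.r.t. O_n is 2^n. -/
/-- The diamond-chain graph `O_n`.  Vertices are pairs `(t, i) : ℕ × ℕ`:
`u_i = (0, i)`, `a_i = (1, i)`, `b_i = (2, i)`.  For each `1 ≤ i ≤ n` (indexed by
`i - 1 ∈ range n` below) it has the edges
`(u_{i-1}, a_i), (a_i, u_i), (u_{i-1}, b_i), (b_i, u_i)`. -/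
def diamondChain (n : ℕ) : Finset ((ℕ × ℕ) × (ℕ × ℕ)) :=
  (Finset.range n).biUnion (fun i =>
    {((0, i), (1, i + 1)), ((1, i + 1), (0, i + 1)),
     ((0, i), (2, i + 1)), ((2, i + 1), (0, i + 1))})

/-- The candidate justification determined by a choice of side (a-side or b-side)
in each of the `n` diamonds. -/
def sideJust (n : ℕ) (f : Fin n → Bool) : Finset ((ℕ × ℕ) × (ℕ × ℕ)) :=
  Finset.univ.biUnion (fun i : Fin n =>
    let s : ℕ := if f i then 1 else 2
    {((0, (i : ℕ)), (s, (i : ℕ) + 1)), ((s, (i : ℕ) + 1), (0, (i : ℕ) + 1))})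

lemma mem_dc {n : ℕ} {e : (ℕ×ℕ)×(ℕ×ℕ)} :
    e ∈ diamondChain n ↔ ∃ i < n, e = ((0,i),(1,i+1)) ∨ e = ((1,i+1),(0,i+1)) ∨ e = ((0,i),(2,i+1)) ∨ e = ((2,i+1),(0,i+1)) := by
  simp [diamondChain]

lemma mem_sj {n : ℕ} {f : Fin n → Bool} {e : (ℕ×ℕ)×(ℕ×ℕ)} :
    e ∈ sideJust n f ↔ ∃ i : Fin n,
      e = ((0,(i:ℕ)),(if f i then 1 else 2, (i:ℕ)+1)) ∨
      e = ((if f i then 1 else 2,(i:ℕ)+1),(0,(i:ℕ)+1)) := by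
  simp [sideJust]

lemma sj_subset (n : ℕ) (f : Fin n → Bool) : sideJust n f ⊆ diamondChain n := by
  intro e he
  obtain ⟨i, hi⟩ := mem_sj.mp he
  refine mem_dc.mpr ⟨i, i.2, ?_⟩
  by_cases hf : f i <;> simp [hf] at hi <;> tauto

lemma sj_reach (n : ℕ) (f : Fin n → Bool) :
    ∀ j, j ≤ n → Reach (sideJust n f) (0,0) (0,j) := by
  intro j
  induction j with
  | zero => exact fun _ => .refl
  | succ j ih =>
    intro hj
    have hjn : j < n := hj
    have h1 : ((0,j), ((if f ⟨j,hjn⟩ then 1 else 2 : ℕ), j+1)) ∈ sideJust n f :=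
      mem_sj.mpr ⟨⟨j, hjn⟩, Or.inl rfl⟩
    have h2 : (((if f ⟨j,hjn⟩ then 1 else 2 : ℕ), j+1), (0,j+1)) ∈ sideJust n f :=
      mem_sj.mpr ⟨⟨j, hjn⟩, Or.inr rfl⟩
    exact ((ih hjn.le).tail h1).tail h2

lemma reach_struct {n : ℕ} {M : Finset ((ℕ×ℕ)×(ℕ×ℕ))} (hM : M ⊆ diamondChain n)
    {v : ℕ×ℕ} (h : Reach M v (0,n)) :
    (v.1 ≠ 0 → (v, (0, v.2)) ∈ M) ∧
    ∀ i, v.2 ≤ i → i < n →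
      ∃ s, (s = 1 ∨ s = 2) ∧ ((0,i),(s,i+1)) ∈ M ∧ ((s,i+1),(0,i+1)) ∈ M := by
  induction h using Relation.ReflTransGen.head_induction_on with
  | refl => exact ⟨fun h => absurd rfl h, fun i h1 h2 => absurd (h1.trans_lt h2) (lt_irrefl _)⟩
  | head e _ ih =>
    rename_i a c _
    obtain ⟨j, hj, hcase⟩ := mem_dc.mp (hM e)
    rcases hcase with h1 | h1 | h1 | h1 <;> injection h1 with h1a h1c <;> subst h1a h1c
    · refine ⟨fun h => absurd rfl h, fun i hi hin => ?_⟩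
      rcases eq_or_lt_of_le hi with rfl | hlt
      · exact ⟨1, Or.inl rfl, e, ih.1 (by simp)⟩
      · exact ih.2 i hlt hin
    · exact ⟨fun _ => e, fun i hi hin => ih.2 i hi hin⟩
    · refine ⟨fun h => absurd rfl h, fun i hi hin => ?_⟩
      rcases eq_or_lt_of_le hi with rfl | hlt
      · exact ⟨2, Or.inr rfl, e, ih.1 (by simp)⟩
      · exact ih.2 i hlt hin
    · exact ⟨fun _ => e, fun i hi hin => ih.2 i hi hin⟩

/-- Each level's chosen side is in M. -/
lemma path_levels {n : ℕ} {M : Finset ((ℕ×ℕ)×(ℕ×ℕ))} (hM : M ⊆ diamondChain n)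
    (h : Reach M (0,0) (0,n)) :
    ∀ i < n, ∃ s, (s = 1 ∨ s = 2) ∧ ((0,i),(s,i+1)) ∈ M ∧ ((s,i+1),(0,i+1)) ∈ M :=
  fun i hin => (reach_struct hM h).2 i (Nat.zero_le i) hin

lemma sj_isJust (n : ℕ) (f : Fin n → Bool) :
    IsJustification (fun S c => Reach S c.1 c.2) (diamondChain n) (sideJust n f)
      ((0, 0), (0, n)) := by
  refine ⟨sj_subset n f, sj_reach n f n le_rfl, fun M' hM' hr => ?_⟩
  have hsub : M' ⊆ diamondChain n := hM'.1.trans (sj_subset n f)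
  -- every f-side edge is in M'
  have hall : sideJust n f ⊆ M' := by
    intro e he
    obtain ⟨i, hi⟩ := mem_sj.mp he
    obtain ⟨s, hs, h1, h2⟩ := path_levels hsub hr i i.2
    -- the forward edge h1 must be the f-side: s = if f i then 1 else 2
    obtain ⟨k, hk⟩ := mem_sj.mp (hM'.1 h1)
    have hki : (k:ℕ) = (i:ℕ) ∧ s = (if f k then 1 else 2) := by
      rcases hk with hk | hk <;> injection hk with hka hkc
      · exact ⟨(congrArg Prod.snd hka).symm, congrArg Prod.fst hkc⟩
      · exfalso
        have := congrArg Prod.fst hka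
        by_cases hfk : f k <;> simp [hfk] at this
    have hik : k = i := Fin.ext hki.1
    subst hik
    rcases hi with rfl | rfl
    · rwa [← hki.2]
    · rwa [← hki.2]
  exact hM'.2 hall


lemma just_eq_sj {n : ℕ} {M : Finset ((ℕ×ℕ)×(ℕ×ℕ))}
    (h : IsJustification (fun S c => Reach S c.1 c.2) (diamondChain n) M ((0,0),(0,n))) :
    ∃ f : Fin n → Bool, M = sideJust n f := by
  obtain ⟨hsub, hr, hmin⟩ := h
  refine ⟨fun i => decide (((0,(i:ℕ)),(1,(i:ℕ)+1)) ∈ M ∧ (((1:ℕ),(i:ℕ)+1),(0,(i:ℕ)+1)) ∈ M), ?_⟩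
  set f : Fin n → Bool := fun i => decide (((0,(i:ℕ)),(1,(i:ℕ)+1)) ∈ M ∧ (((1:ℕ),(i:ℕ)+1),(0,(i:ℕ)+1)) ∈ M) with hf
  have hsj : sideJust n f ⊆ M := by
    intro e he
    obtain ⟨i, hi⟩ := mem_sj.mp he
    by_cases hb : f i
    · have hmem : ((0,(i:ℕ)),((1:ℕ),(i:ℕ)+1)) ∈ M ∧ (((1:ℕ),(i:ℕ)+1),(0,(i:ℕ)+1)) ∈ M := by
        simpa [hf] using hb
      rcases hi with rfl | rfl <;> simp [hb] <;> [exact hmem.1; exact hmem.2]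
    · obtain ⟨s, hs, h1, h2⟩ := path_levels hsub hr i i.2
      have hs2 : s = 2 := by
        rcases hs with rfl | rfl
        · exfalso; exact hb (by simp [hf, h1, h2])
        · rfl
      subst hs2
      rcases hi with rfl | rfl <;> simp [hb] <;> assumption
  rcases eq_or_ssubset_of_subset hsj with h | h
  · exact h.symm
  · exact absurd (sj_reach n f n le_rfl) (hmin _ h)

lemma sj_card (n : ℕ) (f : Fin n → Bool) : (sideJust n f).card = 2 * n := by
  have key : ∀ i : Fin n, ({((0, (i : ℕ)), ((if f i then 1 else 2 : ℕ), (i : ℕ) + 1)),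
      (((if f i then 1 else 2 : ℕ), (i : ℕ) + 1), (0, (i : ℕ) + 1))} :
      Finset ((ℕ×ℕ)×(ℕ×ℕ))).card = 2 := by
    intro i
    rw [Finset.card_insert_of_notMem (by
      simp only [Finset.mem_singleton]
      intro h
      have := congrArg (fun p => p.1.2) h
      simp at this), Finset.card_singleton]
  rw [sideJust, Finset.card_biUnion, ]
  · simp only [key, Finset.sum_const, Finset.card_univ, Fintype.card_fin, smul_eq_mul]
    ring
  · intro i _ j _ hij
    simp only [Finset.disjoint_left, Finset.mem_insert, Finset.mem_singleton]
    rintro e (rfl | rfl) (he | he) <;> exfalso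
    · exact hij (Fin.ext (by simpa using congrArg (fun p => p.1.2) he))
    · have h1 := congrArg (fun p => p.1.1) he
      by_cases h : f j <;> simp [h] at h1
    · have h1 := congrArg (fun p => p.1.1) he
      by_cases h : f i <;> simp [h] at h1
    · have h2 := congrArg (fun p => p.2.2) he
      simp at h2
      exact hij (Fin.ext h2)

lemma sj_inj (n : ℕ) : Function.Injective (sideJust n) := by
  intro f g h
  funext i
  have h1 : ((0,(i:ℕ)),((if f i then 1 else 2 : ℕ),(i:ℕ)+1)) ∈ sideJust n g :=
    h ▸ mem_sj.mpr ⟨i, Or.inl rfl⟩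
  obtain ⟨k, hk⟩ := mem_sj.mp h1
  rcases hk with hk | hk <;> injection hk with hka hkc
  · have hik : (i:ℕ) = (k:ℕ) := congrArg Prod.snd hka
    have hsk : (if f i then 1 else 2 : ℕ) = (if g k then 1 else 2) := congrArg Prod.fst hkc
    have hki : k = i := Fin.ext hik.symm
    rw [hki] at hsk
    by_cases hfi : f i <;> by_cases hgi : g i <;> simp [hfi, hgi] at hsk ⊢
  · exfalso
    have := congrArg Prod.fst hka
    by_cases hgk : g k <;> simp [hgk] at this

theorem stmt_7 (n : ℕ) :
    (∀ M, IsJustification (fun S c => Reach S c.1 c.2) (diamondChain n) M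
        ((0, 0), (0, n)) → M.card = 2 * n) ∧
    Function.Injective (sideJust n) ∧
    (∀ f : Fin n → Bool,
      IsJustification (fun S c => Reach S c.1 c.2) (diamondChain n) (sideJust n f)
        ((0, 0), (0, n))) ∧
    {M : Finset ((ℕ × ℕ) × (ℕ × ℕ)) |
      IsJustification (fun S c => Reach S c.1 c.2) (diamondChain n) M
        ((0, 0), (0, n))}.ncard = 2 ^ n := by
  refine ⟨fun M hM => ?_, sj_inj n, sj_isJust n, ?_⟩
  · obtain ⟨f, rfl⟩ := just_eq_sj hM
    exact sj_card n f
  · have hset : {M : Finset ((ℕ × ℕ) × (ℕ × ℕ)) |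
        IsJustification (fun S c => Reach S c.1 c.2) (diamondChain n) M
          ((0, 0), (0, n))} = Set.range (sideJust n) := by
      ext M
      simp only [Set.mem_setOf_eq, Set.mem_range]
      constructor
      · intro h; obtain ⟨f, rfl⟩ := just_eq_sj h; exact ⟨f, rfl⟩
      · rintro ⟨f, rfl⟩; exact sj_isJust n f
    rw [hset, ← Set.image_univ, Set.ncard_image_of_injective _ (sj_inj n),
      Set.ncard_univ]
    simp
end

section
/- For a monotonic entailment relation and O ⊨ c, a subset R ⊆ O is a repair (a maximal subset of O not entailing c) if and only if its complement O \ R is a minimal hitting set of the family of all justifications of c w.r.t. O. -/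
/-- A repair for `c` w.r.t. `O`: a maximal subset of `O` not entailing `c`. -/
def IsRepair {A C : Type*} (ent : Finset A → C → Prop)
    (O R : Finset A) (c : C) : Prop :=
  R ⊆ O ∧ ¬ ent R c ∧ ∀ R', R ⊂ R' → R' ⊆ O → ent R' c

/-- `H` is a hitting set of the family of all justifications of `c` w.r.t. `O`. -/
def HitsAllJustifications {A C : Type*} [DecidableEq A] (ent : Finset A → C → Prop)
    (O : Finset A) (c : C) (H : Finset A) : Prop :=
  ∀ J, IsJustification ent O J c → (H ∩ J).Nonempty

lemma exists_just {A C : Type*} [DecidableEq A] (ent : Finset A → C → Prop)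
    (O M : Finset A) (c : C) (hMO : M ⊆ O) (hM : ent M c) :
    ∃ J ⊆ M, IsJustification ent O J c := by
  classical
  set S := M.powerset.filter (fun N => ent N c) with hS
  have hne : S.Nonempty := ⟨M, by simp [hS, hM]⟩
  obtain ⟨J, hJS, hmin⟩ := S.exists_min_image (fun N => N.card) hne
  simp only [hS, Finset.mem_filter, Finset.mem_powerset] at hJS
  refine ⟨J, hJS.1, hJS.1.trans hMO, hJS.2, ?_⟩
  intro M' hM' hent
  have hM'S : M' ∈ S := by
    simp only [hS, Finset.mem_filter, Finset.mem_powerset]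
    exact ⟨hM'.subset.trans hJS.1, hent⟩
  have := hmin M' hM'S
  exact absurd (Finset.card_lt_card hM') (by omega)

theorem stmt_10 {A C : Type*} [DecidableEq A] (ent : Finset A → C → Prop)
    (mono : ∀ (O O' : Finset A) (c : C), ent O c → O ⊆ O' → ent O' c)
    (O : Finset A) (c : C) (h : ent O c) :
    ∀ R ⊆ O,
      (IsRepair ent O R c ↔
        (HitsAllJustifications ent O c (O \ R) ∧
          ∀ H ⊂ O \ R, ¬ HitsAllJustifications ent O c H)) := by
  intro R hRO
  constructor
  · rintro ⟨-, hnot, hmax⟩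
    constructor
    · intro J hJ
      by_contra hemp
      rw [Finset.not_nonempty_iff_eq_empty] at hemp
      have hJR : J ⊆ R := by
        intro x hx
        have hxO := hJ.1 hx
        by_contra hxR
        have : x ∈ (O \ R) ∩ J := by
          simp [Finset.mem_sdiff, hxO, hxR, hx]
        simp [hemp] at this
      exact hnot (mono J R c hJ.2.1 hJR)
    · intro H hH hhits
      obtain ⟨a, haOR, haH⟩ := Finset.exists_of_ssubset hH
      have haO : a ∈ O := (Finset.mem_sdiff.mp haOR).1
      have haR : a ∉ R := (Finset.mem_sdiff.mp haOR).2
      have hR' : ent (insert a R) c :=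
        hmax _ (Finset.ssubset_insert haR) (Finset.insert_subset haO hRO)
      obtain ⟨J, hJR', hJ⟩ := exists_just ent O (insert a R) c
        (Finset.insert_subset haO hRO) hR'
      obtain ⟨x, hx⟩ := hhits J hJ
      rw [Finset.mem_inter] at hx
      have hxR' := hJR' hx.2
      rw [Finset.mem_insert] at hxR'
      have hxH := hH.subset hx.1
      rcases hxR' with rfl | hxR
      · exact haH hx.1
      · exact (Finset.mem_sdiff.mp hxH).2 hxR
  · rintro ⟨hhits, hmin⟩
    refine ⟨hRO, ?_, ?_⟩
    · intro hent
      obtain ⟨J, hJR, hJ⟩ := exists_just ent O R c hRO hent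
      obtain ⟨x, hx⟩ := hhits J hJ
      rw [Finset.mem_inter] at hx
      exact (Finset.mem_sdiff.mp hx.1).2 (hJR hx.2)
    · intro R' hRR' hR'O
      by_contra hnent
      obtain ⟨a, haR', haR⟩ := Finset.exists_of_ssubset hRR'
      have haO : a ∈ O := hR'O haR'
      have haOR : a ∈ O \ R := Finset.mem_sdiff.mpr ⟨haO, haR⟩
      have hHss : (O \ R).erase a ⊂ O \ R := Finset.erase_ssubset haOR
      apply hmin _ hHss
      intro J hJ
      by_contra hemp
      rw [Finset.not_nonempty_iff_eq_empty] at hemp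
      have hJsub : J ⊆ insert a R := by
        intro x hx
        rw [Finset.mem_insert]
        by_contra hcon
        push_neg at hcon
        have hxO := hJ.1 hx
        have : x ∈ (O \ R).erase a ∩ J := by
          simp [Finset.mem_erase, hcon.1, Finset.mem_sdiff, hxO, hcon.2, hx]
        simp [hemp] at this
      have : ent R' c := mono J R' c hJ.2.1
        (hJsub.trans (Finset.insert_subset haR' hRR'.subset))
      exact hnent this
end

section
/- In the graph ontology language, the consequence (v,w) with v ≠ w has a unique justification w.r.t. a finite graph O entailing (v,w) if and only if there is exactly one simple directed path from v to w in O. -/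
/-- `l` is (the vertex list of) a simple directed path from `v` to `w` in `O`. -/
def IsSimplePath {V : Type*} (O : Finset (V × V)) (l : List V) (v w : V) : Prop :=
  l.Nodup ∧ l.head? = some v ∧ l.getLast? = some w ∧
    l.Chain' (fun a b => (a, b) ∈ O)

section Aux

variable {V : Type*} [DecidableEq V]

/-- The edge set of a vertex list. -/
def pathEdges (l : List V) : Finset (V × V) := (l.zip l.tail).toFinset

@[simp] lemma pathEdges_nil : pathEdges ([] : List V) = ∅ := rfl

@[simp] lemma pathEdges_singleton (a : V) : pathEdges [a] = ∅ := rfl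

@[simp] lemma pathEdges_cons_cons (a b : V) (t : List V) :
    pathEdges (a :: b :: t) = insert (a, b) (pathEdges (b :: t)) := by
  simp [pathEdges]

lemma mem_fst_of_mem_pathEdges {a c : V} {l : List V} (h : (a, c) ∈ pathEdges l) :
    a ∈ l := by
  rw [pathEdges, List.mem_toFinset] at h
  exact (List.of_mem_zip h).1

lemma pathEdges_subset {S : Finset (V × V)} :
    ∀ {l : List V}, l.Chain' (fun a b => (a, b) ∈ S) → pathEdges l ⊆ S
  | [], _ => by simp
  | [a], _ => by simp
  | a :: b :: t, h => by
    rw [List.Chain', List.isChain_cons_cons] at h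
    rw [pathEdges_cons_cons]
    exact Finset.insert_subset h.1 (pathEdges_subset h.2)

lemma reach_mono {S T : Finset (V × V)} (h : S ⊆ T) {a b : V} (hr : Reach S a b) :
    Reach T a b :=
  Relation.ReflTransGen.mono (fun _ _ hxy => h hxy) a b hr

lemma reach_pathEdges : ∀ (l : List V) {a b : V}, l.head? = some a →
    l.getLast? = some b → Reach (pathEdges l) a b
  | [], a, b, h, _ => by simp at h
  | [x], a, b, h, h' => by
    simp only [List.head?_cons, Option.some.injEq] at h
    simp only [List.getLast?_singleton, Option.some.injEq] at h'
    subst h; subst h'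
    exact Relation.ReflTransGen.refl
  | x :: y :: t, a, b, h, h' => by
    simp only [List.head?_cons, Option.some.injEq] at h
    subst h
    rw [List.getLast?_cons_cons] at h'
    have ih : Reach (pathEdges (y :: t)) y b := reach_pathEdges (y :: t) rfl h'
    have : Reach (pathEdges (x :: y :: t)) y b := by
      refine reach_mono ?_ ih
      rw [pathEdges_cons_cons]; exact Finset.subset_insert _ _
    exact Relation.ReflTransGen.head (by simp) this

lemma nodup_head_last {l : List V} {a : V} (hn : l.Nodup) (h1 : l.head? = some a)
    (h2 : l.getLast? = some a) : l = [a] := by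
  match l with
  | [] => simp at h1
  | [x] =>
    simp only [List.head?_cons, Option.some.injEq] at h1
    rw [h1]
  | x :: y :: t =>
    simp only [List.head?_cons, Option.some.injEq] at h1
    rw [List.getLast?_cons_cons] at h2
    have hmem : x ∈ y :: t := by
      rw [h1]
      exact List.mem_of_mem_getLast? (by rw [h2]; rfl)
    rw [List.nodup_cons] at hn
    exact absurd hmem hn.1

lemma reach_chain {S : Finset (V × V)} {a b : V} (h : Reach S a b) :
    ∃ l : List V, l.head? = some a ∧ l.getLast? = some b ∧
      l.Chain' (fun x y => (x, y) ∈ S) := by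
  unfold Reach at h
  induction h using Relation.ReflTransGen.head_induction_on with
  | refl => exact ⟨[b], rfl, rfl, List.isChain_singleton _⟩
  | head h' _ ih =>
    obtain ⟨l, h1, h2, h3⟩ := ih
    match l, h1 with
    | c :: t, h1 =>
      simp only [List.head?_cons, Option.some.injEq] at h1
      subst h1
      refine ⟨_ :: _ :: t, rfl, ?_, List.isChain_cons_cons.mpr ⟨h', h3⟩⟩
      rwa [List.getLast?_cons_cons]

lemma exists_nodup_chain (S : Finset (V × V)) :
    ∀ (n : ℕ) (l : List V) (a b : V), l.length ≤ n → l.head? = some a →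
      l.getLast? = some b → l.Chain' (fun x y => (x, y) ∈ S) →
      ∃ l' : List V, l'.Nodup ∧ l'.head? = some a ∧ l'.getLast? = some b ∧
        l'.Chain' (fun x y => (x, y) ∈ S) := by
  intro n
  induction n with
  | zero =>
    intro l a b hl h1 _ _
    rw [Nat.le_zero, List.length_eq_zero_iff] at hl
    subst hl; simp at h1
  | succ n ih =>
    intro l a b hl h1 h2 h3
    by_cases hnd : l.Nodup
    · exact ⟨l, hnd, h1, h2, h3⟩
    · obtain ⟨x, hx⟩ := List.exists_duplicate_iff_not_nodup.mpr hnd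
      have hsub : List.Sublist [x, x] l := List.duplicate_iff_sublist.mp hx
      rw [List.cons_sublist_iff] at hsub
      obtain ⟨r₁, r₂, rfl, hx1, hx2⟩ := hsub
      rw [List.singleton_sublist] at hx2
      obtain ⟨p, q, rfl⟩ := List.append_of_mem hx1
      obtain ⟨s, t, rfl⟩ := List.append_of_mem hx2
      -- the list is (p ++ x :: q) ++ (s ++ x :: t); shorten it to p ++ x :: t
      have hre : (p ++ x :: q) ++ (s ++ x :: t) = p ++ x :: (q ++ (s ++ x :: t)) := by
        simp
      rw [hre] at h1 h2 h3 hl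
      -- head
      have hh1 : (p ++ x :: t).head? = some a := by
        rw [List.head?_append] at h1 ⊢
        cases hp : p.head? with
        | none => simpa [hp] using h1
        | some z => simpa [hp] using h1
      -- last
      obtain ⟨u, hu⟩ : ∃ u, (x :: t).getLast? = some u := by
        cases e : (x :: t).getLast? with
        | none => rw [List.getLast?_eq_none_iff] at e; simp at e
        | some u => exact ⟨u, rfl⟩
      have hh2 : (p ++ x :: t).getLast? = some b := by
        have h2' : (p ++ (x :: (q ++ (s ++ x :: t)))).getLast? = some b := h2
        have e1 : (x :: (q ++ (s ++ x :: t))) = (x :: q ++ s) ++ (x :: t) := by simp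
        rw [e1, List.getLast?_append, List.getLast?_append, hu] at h2'
        rw [List.getLast?_append, hu]
        simpa using h2'
      -- chain
      have hch := (List.isChain_append.mp h3)
      obtain ⟨hcp, hcm, hcompat⟩ := hch
      have hcm' : (x :: t).Chain' (fun x y => (x, y) ∈ S) := by
        have e1 : (x :: (q ++ (s ++ x :: t))) = (x :: q ++ s) ++ (x :: t) := by simp
        rw [e1, List.isChain_append] at hcm
        exact hcm.2.1
      have hh3 : (p ++ x :: t).Chain' (fun x y => (x, y) ∈ S) := by
        rw [List.Chain', List.isChain_append]
        refine ⟨hcp, hcm', ?_⟩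
        intro y hy z hz
        simp only [List.head?_cons, Option.mem_def, Option.some.injEq] at hz
        subst hz
        exact hcompat y hy x (by simp)
      -- length
      have hlen : (p ++ x :: t).length ≤ n := by
        simp only [List.length_append, List.length_cons] at hl ⊢
        omega
      exact ih (p ++ x :: t) a b hlen hh1 hh2 hh3

lemma reach_simple {S : Finset (V × V)} {a b : V} (h : Reach S a b) :
    ∃ l : List V, l.Nodup ∧ l.head? = some a ∧ l.getLast? = some b ∧
      l.Chain' (fun x y => (x, y) ∈ S) := by
  obtain ⟨l, h1, h2, h3⟩ := reach_chain h
  exact exists_nodup_chain S l.length l a b le_rfl h1 h2 h3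

lemma path_sub_eq : ∀ (l : List V) {l' : List V} {a b : V}, l.Nodup →
    l.head? = some a → l.getLast? = some b → l'.Nodup → l'.head? = some a →
    l'.getLast? = some b → pathEdges l' ⊆ pathEdges l → l' = l
  | [], l', a, b, _, h1, _, _, _, _, _ => by simp at h1
  | [x], l', a, b, _, h1, h2, hn', h1', h2', _ => by
    simp only [List.head?_cons, Option.some.injEq] at h1
    simp only [List.getLast?_singleton, Option.some.injEq] at h2
    subst h1; subst h2
    exact nodup_head_last hn' h1' h2'
  | x :: y :: t, l', a, b, hn, h1, h2, hn', h1', h2', hsub => by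
    simp only [List.head?_cons, Option.some.injEq] at h1
    subst h1
    rw [List.getLast?_cons_cons] at h2
    have hxnot : x ∉ y :: t := (List.nodup_cons.mp hn).1
    -- b ≠ x
    have hbx : b ≠ x := by
      intro hb
      subst hb
      exact hxnot (List.mem_of_mem_getLast? (by rw [h2]; rfl))
    -- l' = x :: y' :: t''
    obtain ⟨t₂, rfl⟩ : ∃ t₂, l' = x :: t₂ := by
      cases l' with
      | nil => simp at h1'
      | cons c t₂ =>
        simp only [List.head?_cons, Option.some.injEq] at h1'
        exact ⟨t₂, by rw [h1']⟩
    match t₂, h2', hn', hsub with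
    | [], h2', hn', hsub =>
      rw [List.getLast?_singleton] at h2'
      exact absurd ((Option.some.injEq _ _).mp h2').symm hbx
    | y' :: t'', h2', hn', hsub =>
      rw [List.getLast?_cons_cons] at h2'
      have hxnot' : x ∉ y' :: t'' := (List.nodup_cons.mp hn').1
      -- first edge forces y' = y
      have hedge : (x, y') ∈ pathEdges (x :: y :: t) := hsub (by simp)
      rw [pathEdges_cons_cons, Finset.mem_insert] at hedge
      have hyy : y' = y := by
        rcases hedge with he | he
        · exact (Prod.mk.injEq _ _ _ _ ▸ he).2
        · exact absurd (mem_fst_of_mem_pathEdges he) hxnot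
      subst hyy
      -- tails inclusion
      have hsub' : pathEdges (y' :: t'') ⊆ pathEdges (y' :: t) := by
        intro e he
        have he1 : e ∈ pathEdges (x :: y' :: t) := by
          apply hsub
          rw [pathEdges_cons_cons, Finset.mem_insert]
          exact Or.inr he
        rw [pathEdges_cons_cons, Finset.mem_insert] at he1
        rcases he1 with he1 | he1
        · obtain ⟨e1, e2⟩ := e
          rw [Prod.mk.injEq] at he1
          exfalso
          apply hxnot'
          rw [← he1.1]
          exact mem_fst_of_mem_pathEdges he
        · exact he1
      have := path_sub_eq (y' :: t) (l' := y' :: t'') (a := y') (b := b)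
        (List.Nodup.of_cons hn) rfl h2 (List.Nodup.of_cons hn') rfl h2' hsub'
      rw [this]

lemma just_to_path {O M : Finset (V × V)} {a b : V}
    (hJ : IsJustification (fun S c => Reach S c.1 c.2) O M (a, b)) :
    ∃ l : List V, IsSimplePath O l a b ∧ pathEdges l = M := by
  obtain ⟨hMO, hRe, hMin⟩ := hJ
  obtain ⟨l, hnd, h1, h2, h3⟩ := reach_simple hRe
  have hsub : pathEdges l ⊆ M := pathEdges_subset h3
  have hreach : Reach (pathEdges l) a b := reach_pathEdges l h1 h2
  have heq : pathEdges l = M := by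
    by_contra hne
    exact hMin (pathEdges l) (Finset.ssubset_iff_subset_ne.mpr ⟨hsub, hne⟩) hreach
  exact ⟨l, ⟨hnd, h1, h2, h3.imp fun _ _ hx => hMO hx⟩, heq⟩

lemma path_to_just {O : Finset (V × V)} {a b : V} {l : List V}
    (hsp : IsSimplePath O l a b) :
    IsJustification (fun S c => Reach S c.1 c.2) O (pathEdges l) (a, b) := by
  obtain ⟨hnd, h1, h2, h3⟩ := hsp
  refine ⟨pathEdges_subset h3, reach_pathEdges l h1 h2, ?_⟩
  intro M' hM' hRe
  obtain ⟨l'', hnd'', h1'', h2'', h3''⟩ := reach_simple hRe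
  have hsub'' : pathEdges l'' ⊆ pathEdges l :=
    (pathEdges_subset h3'').trans hM'.subset
  have heq : l'' = l := path_sub_eq l hnd h1 h2 hnd'' h1'' h2'' hsub''
  subst heq
  exact (Finset.ssubset_def.mp hM').2 (pathEdges_subset h3'')

end Aux

theorem stmt_14 {V : Type*} [Countable V] [DecidableEq V]
    (O : Finset (V × V)) (v w : V) (hvw : v ≠ w) (h : Reach O v w) :
    (∃! M : Finset (V × V),
        IsJustification (fun S c => Reach S c.1 c.2) O M (v, w)) ↔
      (∃! l : List V, IsSimplePath O l v w) := by
  constructor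
  · rintro ⟨M, hM, hMu⟩
    obtain ⟨l₀, hnd, h1, h2, h3⟩ := reach_simple h
    refine ⟨l₀, ⟨hnd, h1, h2, h3⟩, ?_⟩
    intro l' hl'
    have hJ' := path_to_just hl'
    have hJ₀ := path_to_just (⟨hnd, h1, h2, h3⟩ : IsSimplePath O l₀ v w)
    have e1 : pathEdges l' = M := hMu _ hJ'
    have e2 : pathEdges l₀ = M := hMu _ hJ₀
    exact path_sub_eq l₀ hnd h1 h2 hl'.1 hl'.2.1 hl'.2.2.1 (by rw [e1, e2])
  · rintro ⟨l, hl, hlu⟩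
    refine ⟨pathEdges l, path_to_just hl, ?_⟩
    intro M hM
    obtain ⟨l', hl', heq⟩ := just_to_path hM
    rw [← heq, hlu l' hl']
end
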